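/- A point p lies in [X_0, X_K] and (p, v) is on the piecewise-linear curve through points (X_0,Y_0),...,(X_K,Y_K) with X_0 < X_1 < ... < X_K if and only if there exist nonnegative weights z_0,...,z_K summing to 1 with at most two nonzero weights, those being at consecutive indices, such that p = Σ_k X_k·z_k and v = Σ_k Y_k·z_k. -/

import Mathlib

open Set

theorem stmt11 (K : ℕ) (hK : 0 < K) (X Y : Fin (K + 1) → ℝ)
    (hmono : StrictMono X) (p v : ℝ) :
    (∃ k : Fin K, p ∈ Icc (X k.castSucc) (X k.succ) ∧
        v = Y k.castSucc + (Y k.succ - Y k.castSucc) * (p - X k.castSucc)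
              / (X k.succ - X k.castSucc))
    ↔ ∃ z : Fin (K + 1) → ℝ,
        (∀ j, 0 ≤ z j) ∧ (∑ j, z j) = 1 ∧
        (∃ k : Fin K, ∀ j, z j ≠ 0 → j = k.castSucc ∨ j = k.succ) ∧
        p = ∑ j, X j * z j ∧ v = ∑ j, Y j * z j := by
  constructor
  · rintro ⟨k, ⟨hp1, hp2⟩, hv⟩
    set a := k.castSucc
    set b := k.succ
    have hab : a ≠ b := (Fin.castSucc_lt_succ (i := k)).ne
    have hX : X a < X b := hmono (Fin.castSucc_lt_succ (i := k))
    have hXne : X b - X a ≠ 0 := sub_ne_zero.mpr hX.ne'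
    set t : ℝ := (p - X a) / (X b - X a) with ht
    have ht0 : 0 ≤ t := div_nonneg (by linarith) (by linarith)
    have ht1 : t ≤ 1 := by
      rw [div_le_one (by linarith)]; linarith
    refine ⟨fun j => (if j = a then 1 - t else 0) + (if j = b then t else 0),
      ?_, ?_, ⟨k, ?_⟩, ?_, ?_⟩
    · intro j
      dsimp only
      split_ifs <;> simp_all <;> linarith
    · rw [Finset.sum_add_distrib, Finset.sum_ite_eq', Finset.sum_ite_eq']
      simp
    · intro j hj
      by_contra h
      push_neg at h
      simp [a, b, h.1, h.2] at hj
    · rw [show (fun j => X j * ((if j = a then 1 - t else 0) + (if j = b then t else 0)))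
        = fun j => (if j = a then X a * (1 - t) else 0) + (if j = b then X b * t else 0) from
          funext fun j => by split_ifs with h1 h2 <;> simp_all,
        Finset.sum_add_distrib, Finset.sum_ite_eq', Finset.sum_ite_eq']
      simp only [Finset.mem_univ, if_true]
      rw [ht]
      field_simp
      ring
    · rw [show (fun j => Y j * ((if j = a then 1 - t else 0) + (if j = b then t else 0)))
        = fun j => (if j = a then Y a * (1 - t) else 0) + (if j = b then Y b * t else 0) from
          funext fun j => by split_ifs with h1 h2 <;> simp_all,
        Finset.sum_add_distrib, Finset.sum_ite_eq', Finset.sum_ite_eq']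
      simp only [Finset.mem_univ, if_true]
      rw [hv, ht]
      field_simp
      ring
  · rintro ⟨z, hz0, hzs, ⟨k, hsupp⟩, hp, hv⟩
    set a := k.castSucc
    set b := k.succ
    have hab : a ≠ b := (Fin.castSucc_lt_succ (i := k)).ne
    have hX : X a < X b := hmono (Fin.castSucc_lt_succ (i := k))
    have hXne : X b - X a ≠ 0 := sub_ne_zero.mpr hX.ne'
    have hzero : ∀ j, j ≠ a → j ≠ b → z j = 0 := by
      intro j h1 h2
      by_contra h
      rcases hsupp j h with h' | h' <;> [exact h1 h'; exact h2 h']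
    have key : ∀ f : Fin (K+1) → ℝ, ∑ j, f j * z j = f a * z a + f b * z b := by
      intro f
      rw [Finset.sum_eq_add_of_mem a b (Finset.mem_univ a) (Finset.mem_univ b) hab]
      intro c _ hc
      rw [hzero c hc.1 hc.2, mul_zero]
    have hsum : z a + z b = 1 := by
      have := key (fun _ => 1)
      simp at this
      rw [← this, ← hzs]
    have hpe : p = X a * z a + X b * z b := by rw [hp, key]
    have hve : v = Y a * z a + Y b * z b := by rw [hv, key]
    have hza : z a = 1 - z b := by linarith
    have hpa : p - X a = (X b - X a) * z b := by rw [hpe, hza]; ring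
    have hpb : X b - p = (X b - X a) * z a := by rw [hpe, hza]; ring
    refine ⟨k, ⟨?_, ?_⟩, ?_⟩
    · show X a ≤ p
      nlinarith [mul_nonneg (sub_nonneg.mpr hX.le) (hz0 b)]
    · show p ≤ X b
      nlinarith [mul_nonneg (sub_nonneg.mpr hX.le) (hz0 a)]
    · show v = Y a + (Y b - Y a) * (p - X a) / (X b - X a)
      rw [hve, hza]
      rw [hpa]
      field_simp
      ring
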